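/- In the braid group B_n (n ≥ 3), define φ_n(β) = δ_n β δ_n^{−1} with δ_n = σ_1 ⋯ σ_{n−1}, and for r ≥ 1 set λ_{n,r} = φ_n^{r+1}(a_{n−2,n−1}) · φ_n^r(a_{n−2,n−1}) ⋯ φ_n^2(a_{n−2,n−1}). Then λ_{n,r} = δ_n^r δ_{n−1}^{−r}, where δ_{n−1} = σ_1 ⋯ σ_{n−2}. -/

import Mathlib

/-- Relations of the braid group `B_n` on generators `σ_1, …, σ_{n-1}`
(indexed by natural numbers; the generators of index `0` or `≥ n` are killed,
so that the presented group is exactly `B_n`). -/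
def braidRels (n : ℕ) : Set (FreeGroup ℕ) :=
  {r | (∃ i j : ℕ, 1 ≤ i ∧ i + 2 ≤ j ∧ j ≤ n - 1 ∧
          r = FreeGroup.of i * FreeGroup.of j * (FreeGroup.of i)⁻¹ * (FreeGroup.of j)⁻¹) ∨
       (∃ i : ℕ, 1 ≤ i ∧ i + 1 ≤ n - 1 ∧
          r = FreeGroup.of i * FreeGroup.of (i + 1) * FreeGroup.of i *
              (FreeGroup.of (i + 1) * FreeGroup.of i * FreeGroup.of (i + 1))⁻¹) ∨
       (∃ i : ℕ, (i = 0 ∨ n ≤ i) ∧ r = FreeGroup.of i)}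

/-- The braid group `B_n`. -/
def BraidGroup (n : ℕ) : Type := PresentedGroup (braidRels n)

instance (n : ℕ) : Group (BraidGroup n) := by unfold BraidGroup; infer_instance

/-- The Artin generator `σ_i` of `B_n` (nontrivial for `1 ≤ i ≤ n-1`). -/
def σ (n i : ℕ) : BraidGroup n := PresentedGroup.of i

/-- `δ_{p,q} = σ_p σ_{p+1} ⋯ σ_{q-1}` (equal to `1` when `q ≤ p`). -/
def δδ (n p q : ℕ) : BraidGroup n :=
  ((List.range (q - p)).map (fun k => σ n (p + k))).prod

/-- The Birman–Ko–Lee generator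
`a_{p,q} = σ_p ⋯ σ_{q-2} σ_{q-1} σ_{q-2}⁻¹ ⋯ σ_p⁻¹ = δ_{p,q-1} σ_{q-1} δ_{p,q-1}⁻¹`. -/
def a (n p q : ℕ) : BraidGroup n :=
  δδ n p (q - 1) * σ n (q - 1) * (δδ n p (q - 1))⁻¹

/-- A braid of `B_n` is `σ_i`-positive if it is represented by a word in the
letters `σ_j^{±1}` containing at least one `σ_i`, no `σ_i⁻¹`,
and no letter `σ_j^{±1}` with `j > i`. -/
def SigmaPositive (n i : ℕ) (β : BraidGroup n) : Prop :=
  ∃ w : List (ℕ × Bool),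
    ((w.map (fun l => if l.2 then σ n l.1 else (σ n l.1)⁻¹)).prod = β) ∧
    (i, true) ∈ w ∧ (i, false) ∉ w ∧ ∀ l ∈ w, l.1 ≤ i

section BraidAux

variable {n : ℕ}

lemma braid_rel_one {r : FreeGroup ℕ} (h : r ∈ braidRels n) :
    (QuotientGroup.mk r : BraidGroup n) = 1 :=
  (QuotientGroup.eq_one_iff r).2 (Subgroup.subset_normalClosure h)

lemma sigma_comm {i j : ℕ} (h1 : 1 ≤ i) (h2 : i + 2 ≤ j) (h3 : j ≤ n - 1) :
    Commute (σ n i) (σ n j) := by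
  have h : (QuotientGroup.mk (FreeGroup.of i * FreeGroup.of j * (FreeGroup.of i)⁻¹ *
      (FreeGroup.of j)⁻¹) : BraidGroup n) = 1 :=
    braid_rel_one (Or.inl ⟨i, j, h1, h2, h3, rfl⟩)
  have h' : σ n i * σ n j * (σ n i)⁻¹ * (σ n j)⁻¹ = 1 := by
    exact h
  have := congrArg (· * (σ n j * σ n i)) h'
  simpa [mul_assoc, Commute, SemiconjBy] using this

lemma sigma_braid {i : ℕ} (h1 : 1 ≤ i) (h2 : i + 1 ≤ n - 1) :
    σ n i * σ n (i + 1) * σ n i = σ n (i + 1) * σ n i * σ n (i + 1) := by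
  have h : (QuotientGroup.mk (FreeGroup.of i * FreeGroup.of (i + 1) * FreeGroup.of i *
      (FreeGroup.of (i + 1) * FreeGroup.of i * FreeGroup.of (i + 1))⁻¹) : BraidGroup n) = 1 :=
    braid_rel_one (Or.inr (Or.inl ⟨i, h1, h2, rfl⟩))
  have h' : σ n i * σ n (i + 1) * σ n i *
      (σ n (i + 1) * σ n i * σ n (i + 1))⁻¹ = 1 := by
    exact h
  have := congrArg (· * (σ n (i + 1) * σ n i * σ n (i + 1))) h'
  simpa [mul_assoc] using this

lemma δδ_split (p q s : ℕ) (hpq : p ≤ q) (hqs : q ≤ s) :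
    δδ n p s = δδ n p q * δδ n q s := by
  unfold δδ
  have hsp : s - p = (q - p) + (s - q) := by omega
  rw [hsp, List.range_add, List.map_append, List.prod_append, List.map_map]
  congr 2
  apply List.map_congr_left
  intro k _
  simp only [Function.comp]
  congr 1
  omega

lemma δδ_single (p : ℕ) : δδ n p (p + 1) = σ n p := by
  simp [δδ, List.range_succ]

lemma δδ_one (p q : ℕ) (h : q = p + 1) : δδ n p q = σ n p := by
  subst h; exact δδ_single p

lemma δδ_sigma_conj {i : ℕ} (h1 : 1 ≤ i) (h2 : i + 1 ≤ n - 1) :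
    δδ n 1 n * σ n i = σ n (i + 1) * δδ n 1 n := by
  have hn2 : i + 2 ≤ n := by omega
  have hA : Commute (σ n (i + 1)) (δδ n 1 i) := by
    apply Commute.list_prod_right
    intro x hx
    simp only [List.mem_map, List.mem_range] at hx
    obtain ⟨k, hk, rfl⟩ := hx
    exact (sigma_comm (by omega) (by omega) h2).symm
  have hB : Commute (σ n i) (δδ n (i + 2) n) := by
    apply Commute.list_prod_right
    intro x hx
    simp only [List.mem_map, List.mem_range] at hx
    obtain ⟨k, hk, rfl⟩ := hx
    exact sigma_comm h1 (by omega) (by omega)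
  have hd : δδ n 1 n = δδ n 1 i * (σ n i * (σ n (i + 1) * δδ n (i + 2) n)) := by
    rw [δδ_split 1 i n h1 (by omega), δδ_split i (i + 1) n (by omega) (by omega),
      δδ_split (i + 1) (i + 2) n (by omega) hn2, δδ_single, δδ_single]
  have hbr : σ n i * (σ n (i + 1) * (σ n i * δδ n (i + 2) n))
      = σ n (i + 1) * (σ n i * (σ n (i + 1) * δδ n (i + 2) n)) := by
    have h3 := sigma_braid h1 h2
    simp only [← mul_assoc]
    rw [h3]
  rw [hd]
  simp only [mul_assoc]
  rw [← hB.eq, hbr, ← mul_assoc, ← hA.eq, mul_assoc]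

end BraidAux

theorem stmt13 (n r : ℕ) (hn : 3 ≤ n) (hr : 1 ≤ r) :
    ((List.range r).map (fun j =>
        (δδ n 1 n) ^ (r + 1 - j) * a n (n - 2) (n - 1) * ((δδ n 1 n) ^ (r + 1 - j))⁻¹)).prod =
      (δδ n 1 n) ^ r * ((δδ n 1 (n - 1)) ^ r)⁻¹ := by
  clear hr
  set d := δδ n 1 n with hd
  set d' := δδ n 1 (n - 1) with hd'
  have hx : a n (n - 2) (n - 1) = σ n (n - 2) := by
    have h1 : n - 1 - 1 = n - 2 := by omega
    simp [a, h1, δδ, Nat.sub_self]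
  have hconj : d * σ n (n - 2) = σ n (n - 1) * d := by
    have h2 : n - 2 + 1 = n - 1 := by omega
    have := δδ_sigma_conj (n := n) (i := n - 2) (by omega) (by omega)
    rwa [h2] at this
  have hsplit : d = d' * σ n (n - 1) := by
    rw [hd, hd', δδ_split 1 (n - 1) n (by omega) (by omega), δδ_one (n - 1) n (by omega)]
  have hs : σ n (n - 1) * d⁻¹ = d'⁻¹ := by
    rw [hsplit, mul_inv_rev, ← mul_assoc, mul_inv_cancel, one_mul]
  induction r with
  | zero => simp
  | succ r ih =>
    rw [List.range_succ_eq_map, List.map_cons, List.prod_cons, List.map_map]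
    have hmap : ((List.range r).map ((fun j =>
        d ^ (r + 1 + 1 - j) * a n (n - 2) (n - 1) * (d ^ (r + 1 + 1 - j))⁻¹) ∘ Nat.succ)).prod
        = ((List.range r).map (fun j =>
        d ^ (r + 1 - j) * a n (n - 2) (n - 1) * (d ^ (r + 1 - j))⁻¹)).prod := by
      congr 1
      apply List.map_congr_left
      intro k hk
      simp only [List.mem_range] at hk
      simp only [Function.comp]
      have : r + 1 + 1 - Nat.succ k = r + 1 - k := by omega
      rw [this]
    rw [hmap, ih, Nat.sub_zero, hx]
    have e3 : (d' : BraidGroup n) ^ (r + 1) = d' ^ r * d' := pow_succ d' r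
    rw [e3, mul_inv_rev]
    have h5 : d ^ (r + 1 + 1) * σ n (n - 2) = d ^ (r + 1) * σ n (n - 1) * d := by
      rw [pow_succ, mul_assoc, hconj, mul_assoc]
    have h6 : (d ^ (r + 1))⁻¹ * d ^ r = d⁻¹ := by
      rw [pow_succ, mul_inv_rev, mul_assoc, inv_mul_cancel, mul_one]
    calc d ^ (r + 1 + 1) * σ n (n - 2) * (d ^ (r + 1 + 1))⁻¹ * (d ^ r * (d' ^ r)⁻¹)
        = d ^ (r + 1) * σ n (n - 1) * (d * (d ^ (r + 1 + 1))⁻¹ * d ^ r) * (d' ^ r)⁻¹ := by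
          rw [h5]; simp only [mul_assoc]
      _ = d ^ (r + 1) * σ n (n - 1) * ((d ^ (r + 1))⁻¹ * d ^ r) * (d' ^ r)⁻¹ := by
          have h7 : d * (d ^ (r + 1 + 1))⁻¹ = (d ^ (r + 1))⁻¹ := by
            rw [pow_succ d (r + 1), mul_inv_rev, ← mul_assoc, mul_inv_cancel, one_mul]
          rw [h7]
      _ = d ^ (r + 1) * (σ n (n - 1) * d⁻¹) * (d' ^ r)⁻¹ := by
          rw [h6, mul_assoc (d ^ (r + 1))]
      _ = d ^ (r + 1) * (d'⁻¹ * (d' ^ r)⁻¹) := by rw [hs, mul_assoc]
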